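/- (General-distortion inequality between the fully active and summed-distortion exponents.) Let A be a nonempty finite set and let d : A × A → ℝ be nonnegative, symmetric, with d(a,a) = 0 for all a. Let P_0, P_1 be strictly positive PMFs on A, and let λ, Δ_0, Δ_1 ≥ 0. Then min over PMFs P_Y with D̃_{Δ_0}(P_Y, P_0) ≤ λ of D̃_{Δ_1}(P_Y, P_1) is at most min over PMFs P_Z with D(P_Z ‖ P_0) ≤ λ of D̃_{Δ_0 + Δ_1}(P_Z, P_1). -/
import Mathlib


open scoped Classical
open Finset Filter

noncomputable section

/-- A probability mass function on a finite alphabet, as a real-valued function. -/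
def IsPMF {A : Type} [Fintype A] (P : A → ℝ) : Prop :=
  (∀ a, 0 ≤ P a) ∧ ∑ a, P a = 1

/-- Kullback--Leibler divergence `D(Q‖P) = ∑_{a : Q a > 0} Q a · ln (Q a / P a)`. -/
def klDiv {A : Type} [Fintype A] (Q P : A → ℝ) : ℝ :=
  ∑ a, if 0 < Q a then Q a * Real.log (Q a / P a) else 0

/-- First marginal of a joint PMF on `A × A`. -/
def margX {A : Type} [Fintype A] (Q : A × A → ℝ) : A → ℝ := fun a => ∑ b, Q (a, b)

/-- Second marginal of a joint PMF on `A × A`. -/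
def margY {A : Type} [Fintype A] (Q : A × A → ℝ) : A → ℝ := fun b => ∑ a, Q (a, b)

/-- Expected distortion of a joint PMF. -/
def expDist {A : Type} [Fintype A] (d : A → A → ℝ) (Q : A × A → ℝ) : ℝ :=
  ∑ q : A × A, Q q * d q.1 q.2

/-- Generalized divergence `D̃_Δ(P_Y, P)`: minimum of `D(Q_X‖P)` over joint PMFs `Q`
with second marginal `P_Y` and expected distortion at most `Δ`. -/
def Dtilde {A : Type} [Fintype A] (d : A → A → ℝ) (Δ : ℝ) (PY P : A → ℝ) : ℝ :=
  sInf {v | ∃ Q : A × A → ℝ,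
    IsPMF Q ∧ margY Q = PY ∧ expDist d Q ≤ Δ ∧ v = klDiv (margX Q) P}

/-- Earth mover distance between two PMFs. -/
def EMD {A : Type} [Fintype A] (d : A → A → ℝ) (P P' : A → ℝ) : ℝ :=
  sInf {v | ∃ R : A × A → ℝ,
    IsPMF R ∧ margX R = P ∧ margY R = P' ∧ v = expDist d R}

/-- Memoryless (product) probability of a sequence. -/
def seqProb {A : Type} {n : ℕ} (P : A → ℝ) (x : Fin n → A) : ℝ := ∏ i, P (x i)

/-- Additive extension of a per-letter distortion to sequences. -/
def dSeq {A : Type} {n : ℕ} (d : A → A → ℝ) (x y : Fin n → A) : ℝ := ∑ i, d (x i) (y i)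

/-- Empirical PMF (type) of a sequence. -/
def empP {A : Type} [Fintype A] [DecidableEq A] {n : ℕ} (x : Fin n → A) : A → ℝ :=
  fun a => ((univ.filter fun i => x i = a).card : ℝ) / (n : ℝ)

/-- Empirical entropy of a sequence. -/
def empEnt {A : Type} [Fintype A] [DecidableEq A] {n : ℕ} (y : Fin n → A) : ℝ :=
  -∑ a, if 0 < empP y a then empP y a * Real.log (empP y a) else 0

/-- Conditional type class `T(y|x)`. -/
def condTypeClass {A : Type} [Fintype A] [DecidableEq A] {n : ℕ} (x y : Fin n → A) :
    Finset (Fin n → A) :=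
  univ.filter fun y' => ∀ a b : A,
    (univ.filter fun i => x i = a ∧ y' i = b).card
      = (univ.filter fun i => x i = a ∧ y i = b).card

/-- Number of distinct conditional type classes `T(y|x)` arising from `y` with
`dn x y ≤ n·Δ`. -/
def numCondTypes {A : Type} [Fintype A] [DecidableEq A] {n : ℕ}
    (dn : (Fin n → A) → (Fin n → A) → ℝ) (Δ : ℝ) (x : Fin n → A) : ℕ :=
  ((univ.filter fun y => dn x y ≤ (n : ℝ) * Δ).image fun y => condTypeClass x y).card

/-- The optimal attack channel `A*_Δ(y|x) = c_n(x)/|T(y|x)|` on admissible `y`,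
and `0` otherwise; here `c_n(x)` is the reciprocal of the number of admissible
conditional type classes. -/
def Astar {A : Type} [Fintype A] [DecidableEq A] {n : ℕ}
    (dn : (Fin n → A) → (Fin n → A) → ℝ) (Δ : ℝ) (x y : Fin n → A) : ℝ :=
  if dn x y ≤ (n : ℝ) * Δ then
    ((numCondTypes dn Δ x : ℝ))⁻¹ / ((condTypeClass x y).card : ℝ)
  else 0

/-- A channel on `A^n`: `W x y` is the conditional probability of output `y` given input `x`. -/
def IsChannel {A : Type} [Fintype A] {n : ℕ}
    (W : (Fin n → A) → (Fin n → A) → ℝ) : Prop :=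
  (∀ x y, 0 ≤ W x y) ∧ ∀ x, ∑ y, W x y = 1

/-- The class `C_Δ` of admissible channels: those assigning zero probability to any
`y` with `dn x y > n·Δ`. -/
def InC {A : Type} [Fintype A] {n : ℕ}
    (dn : (Fin n → A) → (Fin n → A) → ℝ) (Δ : ℝ)
    (W : (Fin n → A) → (Fin n → A) → ℝ) : Prop :=
  IsChannel W ∧ ∀ x y, (n : ℝ) * Δ < dn x y → W x y = 0

/-- False positive probability: `Φ y` is the probability of deciding `H₁` given `y`. -/
def PFP {A : Type} [Fintype A] {n : ℕ} (P0 : A → ℝ) (Φ : (Fin n → A) → ℝ)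
    (A0 : (Fin n → A) → (Fin n → A) → ℝ) : ℝ :=
  ∑ x, ∑ y, seqProb P0 x * A0 x y * Φ y

/-- False negative probability. -/
def PFN {A : Type} [Fintype A] {n : ℕ} (P1 : A → ℝ) (Φ : (Fin n → A) → ℝ)
    (A1 : (Fin n → A) → (Fin n → A) → ℝ) : ℝ :=
  ∑ x, ∑ y, seqProb P1 x * A1 x y * (1 - Φ y)

/-- Sequence-level generalized divergence
`D̃ⁿ_Δ(y,P) = min_{x : d(x,y) ≤ nΔ} D(P̂_x‖P)`. -/
def DtildeN {A : Type} [Fintype A] [DecidableEq A] {n : ℕ} (d : A → A → ℝ) (Δ : ℝ)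
    (y : Fin n → A) (P : A → ℝ) : ℝ :=
  sInf {v | ∃ x : Fin n → A, dSeq d x y ≤ (n : ℝ) * Δ ∧ v = klDiv (empP x) P}

/-- Diagonal coupling of a PMF with itself. -/
def diagQ {A : Type} [Fintype A] (P : A → ℝ) : A × A → ℝ :=
  fun p => if p.1 = p.2 then P p.1 else 0

lemma diagQ_isPMF {A : Type} [Fintype A] (P : A → ℝ) (hP : IsPMF P) :
    IsPMF (diagQ P) := by
  constructor
  · intro p; unfold diagQ; split <;> simp [hP.1]
  · rw [Fintype.sum_prod_type]
    simp [diagQ, hP.2]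

lemma diagQ_margX {A : Type} [Fintype A] (P : A → ℝ) : margX (diagQ P) = P := by
  funext a; simp [margX, diagQ]

lemma diagQ_margY {A : Type} [Fintype A] (P : A → ℝ) : margY (diagQ P) = P := by
  funext b; simp [margY, diagQ]

lemma diagQ_expDist {A : Type} [Fintype A] (d : A → A → ℝ) (hdrefl : ∀ a, d a a = 0)
    (P : A → ℝ) : expDist d (diagQ P) = 0 := by
  apply Finset.sum_eq_zero
  intro p _
  unfold diagQ
  by_cases h : p.1 = p.2
  · rw [if_pos h, ← h, hdrefl, mul_zero]
  · rw [if_neg h, zero_mul]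

lemma margX_isPMF {A : Type} [Fintype A] (Q : A × A → ℝ) (hQ : IsPMF Q) :
    IsPMF (margX Q) := by
  constructor
  · intro a; exact Finset.sum_nonneg fun b _ => hQ.1 _
  · rw [show ∑ a, margX Q a = ∑ p : A × A, Q p by rw [Fintype.sum_prod_type]; rfl]
    exact hQ.2

lemma klDiv_nonneg' {A : Type} [Fintype A] (Q P : A → ℝ)
    (hQ : IsPMF Q) (hP : IsPMF P) (hPpos : ∀ a, 0 < P a) : 0 ≤ klDiv Q P := by
  have h : ∀ a : A, Q a - P a ≤ (if 0 < Q a then Q a * Real.log (Q a / P a) else 0) := by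
    intro a
    by_cases hq : 0 < Q a
    · rw [if_pos hq]
      have hlog : Real.log (P a / Q a) ≤ P a / Q a - 1 :=
        Real.log_le_sub_one_of_pos (div_pos (hPpos a) hq)
      have hinv : Real.log (Q a / P a) = - Real.log (P a / Q a) := by
        rw [← Real.log_inv]; congr 1; field_simp
      have h1 : 1 - P a / Q a ≤ Real.log (Q a / P a) := by rw [hinv]; linarith
      have h2 := mul_le_mul_of_nonneg_left h1 hq.le
      have h3 : Q a * (P a / Q a) = P a := by field_simp
      nlinarith
    · rw [if_neg hq]
      have hq0 : Q a = 0 := le_antisymm (not_lt.mp hq) (hQ.1 a)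
      have := (hPpos a).le
      linarith
  have hsum := Finset.sum_le_sum (fun a (_ : a ∈ Finset.univ) => h a)
  rw [Finset.sum_sub_distrib, hQ.2, hP.2] at hsum
  simpa [klDiv] using hsum

lemma klDiv_self_eq_zero {A : Type} [Fintype A] (P : A → ℝ) (hPpos : ∀ a, 0 < P a) :
    klDiv P P = 0 := by
  apply Finset.sum_eq_zero
  intro a _
  rw [if_pos (hPpos a), div_self (hPpos a).ne', Real.log_one, mul_zero]

lemma Dtilde_bddBelow {A : Type} [Fintype A] (d : A → A → ℝ) (Δ : ℝ) (PY P : A → ℝ)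
    (hP : IsPMF P) (hPpos : ∀ a, 0 < P a) :
    BddBelow {v | ∃ Q : A × A → ℝ,
      IsPMF Q ∧ margY Q = PY ∧ expDist d Q ≤ Δ ∧ v = klDiv (margX Q) P} := by
  refine ⟨0, ?_⟩
  rintro v ⟨Q, hQ, -, -, rfl⟩
  exact klDiv_nonneg' _ _ (margX_isPMF Q hQ) hP hPpos

lemma Dtilde_nonneg {A : Type} [Fintype A] (d : A → A → ℝ) (Δ : ℝ) (PY P : A → ℝ)
    (hP : IsPMF P) (hPpos : ∀ a, 0 < P a) : 0 ≤ Dtilde d Δ PY P := by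
  apply Real.sInf_nonneg
  rintro v ⟨Q, hQ, -, -, rfl⟩
  exact klDiv_nonneg' _ _ (margX_isPMF Q hQ) hP hPpos

lemma Dtilde_le {A : Type} [Fintype A] (d : A → A → ℝ) (Δ : ℝ) (PY P : A → ℝ)
    (hP : IsPMF P) (hPpos : ∀ a, 0 < P a) (Q : A × A → ℝ)
    (hQ : IsPMF Q) (hY : margY Q = PY) (hdist : expDist d Q ≤ Δ) :
    Dtilde d Δ PY P ≤ klDiv (margX Q) P :=
  csInf_le (Dtilde_bddBelow d Δ PY P hP hPpos) ⟨Q, hQ, hY, hdist, rfl⟩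

lemma mix_margX {A : Type} [Fintype A] (c c' : ℝ) (Q R : A × A → ℝ) :
    margX (fun p => c * Q p + c' * R p) = fun a => c * margX Q a + c' * margX R a := by
  funext a; simp [margX, Finset.sum_add_distrib, Finset.mul_sum]

lemma mix_margY {A : Type} [Fintype A] (c c' : ℝ) (Q R : A × A → ℝ) :
    margY (fun p => c * Q p + c' * R p) = fun b => c * margY Q b + c' * margY R b := by
  funext b; simp [margY, Finset.sum_add_distrib, Finset.mul_sum]

lemma mix_expDist {A : Type} [Fintype A] (d : A → A → ℝ) (c c' : ℝ) (Q R : A × A → ℝ) :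
    expDist d (fun p => c * Q p + c' * R p) = c * expDist d Q + c' * expDist d R := by
  simp [expDist, add_mul, mul_assoc, Finset.sum_add_distrib, Finset.mul_sum]

lemma mix_isPMF {A : Type} [Fintype A] (c c' : ℝ) (hc : 0 ≤ c) (hc' : 0 ≤ c')
    (hcc : c + c' = 1) (Q R : A × A → ℝ) (hQ : IsPMF Q) (hR : IsPMF R) :
    IsPMF (fun p => c * Q p + c' * R p) := by
  constructor
  · intro p; have := hQ.1 p; have := hR.1 p; positivity
  · rw [Finset.sum_add_distrib, ← Finset.mul_sum, ← Finset.mul_sum, hQ.2, hR.2]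
    simpa using hcc

/-- Swapped coupling. -/
lemma swap_sum {A : Type} [Fintype A] (f : A × A → ℝ) :
    ∑ p : A × A, f (p.2, p.1) = ∑ p : A × A, f p := by
  exact Fintype.sum_equiv (Equiv.prodComm A A) _ _ (fun p => rfl)

lemma swap_isPMF {A : Type} [Fintype A] (Q : A × A → ℝ) (hQ : IsPMF Q) :
    IsPMF (fun p : A × A => Q (p.2, p.1)) :=
  ⟨fun p => hQ.1 _, by rw [swap_sum]; exact hQ.2⟩

lemma swap_margX {A : Type} [Fintype A] (Q : A × A → ℝ) :
    margX (fun p : A × A => Q (p.2, p.1)) = margY Q := rfl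

lemma swap_margY {A : Type} [Fintype A] (Q : A × A → ℝ) :
    margY (fun p : A × A => Q (p.2, p.1)) = margX Q := rfl

lemma swap_expDist {A : Type} [Fintype A] (d : A → A → ℝ) (hdsymm : ∀ a b, d a b = d b a)
    (Q : A × A → ℝ) : expDist d (fun p : A × A => Q (p.2, p.1)) = expDist d Q := by
  unfold expDist
  refine Fintype.sum_equiv (Equiv.prodComm A A) _ _ (fun p => ?_)
  show Q (p.2, p.1) * d p.1 p.2 = Q (p.2, p.1) * d p.2 p.1
  rw [hdsymm p.1 p.2]

/-- general-distortion inequality between the fully active and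
summed-distortion exponents. -/
theorem fully_active_le_summed_general
    {A : Type} [Fintype A] [Nonempty A]
    (d : A → A → ℝ) (hd : ∀ a b, 0 ≤ d a b)
    (hdsymm : ∀ a b, d a b = d b a)
    (hdrefl : ∀ a, d a a = 0)
    (P0 P1 : A → ℝ) (hP0 : IsPMF P0) (hP1 : IsPMF P1)
    (hP0pos : ∀ a, 0 < P0 a) (hP1pos : ∀ a, 0 < P1 a)
    (lam Δ0 Δ1 : ℝ) (hlam : 0 ≤ lam) (hΔ0 : 0 ≤ Δ0) (hΔ1 : 0 ≤ Δ1) :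
    sInf {v | ∃ PY : A → ℝ,
        IsPMF PY ∧ Dtilde d Δ0 PY P0 ≤ lam ∧ v = Dtilde d Δ1 PY P1}
      ≤ sInf {v | ∃ PZ : A → ℝ,
        IsPMF PZ ∧ klDiv PZ P0 ≤ lam ∧ v = Dtilde d (Δ0 + Δ1) PZ P1} := by
  apply le_csInf
  · -- RHS set nonempty: take PZ = P0
    exact ⟨Dtilde d (Δ0 + Δ1) P0 P1, P0, hP0,
      by rw [klDiv_self_eq_zero P0 hP0pos]; exact hlam, rfl⟩
  rintro v2 ⟨PZ, hPZ, hZ0, rfl⟩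
  apply le_of_forall_pos_le_add
  intro ε hε
  -- the defining set of Dtilde d (Δ0+Δ1) PZ P1 is nonempty
  have hTne : Set.Nonempty {v | ∃ Q : A × A → ℝ,
      IsPMF Q ∧ margY Q = PZ ∧ expDist d Q ≤ Δ0 + Δ1 ∧ v = klDiv (margX Q) P1} :=
    ⟨klDiv (margX (diagQ PZ)) P1, diagQ PZ, diagQ_isPMF PZ hPZ, diagQ_margY PZ,
      by rw [diagQ_expDist d hdrefl]; linarith, rfl⟩
  have hlt : Dtilde d (Δ0 + Δ1) PZ P1 < Dtilde d (Δ0 + Δ1) PZ P1 + ε := by linarith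
  obtain ⟨t, ⟨Q, hQ, hQY, hQd, rfl⟩, htlt⟩ := exists_lt_of_csInf_lt hTne hlt
  set QX := margX Q with hQXdef
  have hQX : IsPMF QX := margX_isPMF Q hQ
  set D := expDist d Q with hDdef
  have hD0 : 0 ≤ D := Finset.sum_nonneg fun p _ => mul_nonneg (hQ.1 p) (hd p.1 p.2)
  -- choose θ
  set θ : ℝ := if D ≤ Δ1 then 1 else Δ1 / D with hθdef
  have hθfacts : 0 ≤ θ ∧ θ ≤ 1 ∧ θ * D ≤ Δ1 ∧ (1 - θ) * D ≤ Δ0 := by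
    rw [hθdef]
    by_cases h : D ≤ Δ1
    · rw [if_pos h]; refine ⟨by norm_num, le_refl 1, by linarith, by simpa using hΔ0⟩
    · rw [if_neg h]
      push_neg at h
      have hDpos : 0 < D := lt_of_le_of_lt hΔ1 h
      have h1 : Δ1 / D ≤ 1 := by rw [div_le_one hDpos]; linarith
      have h2 : Δ1 / D * D = Δ1 := by field_simp
      refine ⟨by positivity, h1, by rw [h2], ?_⟩
      have : (1 - Δ1 / D) * D = D - Δ1 := by rw [sub_mul, one_mul, h2]
      rw [this]; linarith
  obtain ⟨hθ0, hθ1, hθD1, hθD0⟩ := hθfacts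
  -- the intermediate distribution
  set PY : A → ℝ := fun a => θ * PZ a + (1 - θ) * QX a with hPYdef
  have hPY : IsPMF PY := by
    constructor
    · intro a; have := hPZ.1 a; have := hQX.1 a; rw [hPYdef]; dsimp; nlinarith
    · rw [hPYdef]; dsimp
      rw [Finset.sum_add_distrib, ← Finset.mul_sum, ← Finset.mul_sum, hPZ.2, hQX.2]
      ring
  -- coupling 1 : X with Y, distortion θ·D ≤ Δ1
  set Q1 : A × A → ℝ := fun p => θ * Q p + (1 - θ) * diagQ QX p with hQ1def
  have hQ1 : IsPMF Q1 := mix_isPMF θ (1 - θ) hθ0 (by linarith) (by ring) Q (diagQ QX) hQ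
    (diagQ_isPMF QX hQX)
  have hQ1Y : margY Q1 = PY := by
    rw [hQ1def, mix_margY, diagQ_margY, hQY]
  have hQ1X : margX Q1 = QX := by
    rw [hQ1def, mix_margX, diagQ_margX]
    funext a; ring
  have hQ1d : expDist d Q1 ≤ Δ1 := by
    rw [hQ1def, mix_expDist, diagQ_expDist d hdrefl]
    simpa using hθD1
  -- coupling 2 : Z with Y, distortion (1-θ)·D ≤ Δ0
  set Q2 : A × A → ℝ := fun p => θ * diagQ PZ p + (1 - θ) * Q (p.2, p.1) with hQ2def
  have hQ2 : IsPMF Q2 := mix_isPMF θ (1 - θ) hθ0 (by linarith) (by ring) (diagQ PZ)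
    (fun p => Q (p.2, p.1)) (diagQ_isPMF PZ hPZ) (swap_isPMF Q hQ)
  have hQ2Y : margY Q2 = PY := by
    rw [hQ2def, mix_margY, diagQ_margY, swap_margY]
  have hQ2X : margX Q2 = PZ := by
    rw [hQ2def, mix_margX, diagQ_margX, swap_margX, hQY]
    funext a; ring
  have hQ2d : expDist d Q2 ≤ Δ0 := by
    rw [hQ2def, mix_expDist, diagQ_expDist d hdrefl, swap_expDist d hdsymm]
    simpa using hθD0
  -- conclude
  have h2 : Dtilde d Δ0 PY P0 ≤ lam := by
    have := Dtilde_le d Δ0 PY P0 hP0 hP0pos Q2 hQ2 hQ2Y hQ2d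
    rw [hQ2X] at this
    linarith
  have h1 : Dtilde d Δ1 PY P1 ≤ klDiv QX P1 := by
    have := Dtilde_le d Δ1 PY P1 hP1 hP1pos Q1 hQ1 hQ1Y hQ1d
    rwa [hQ1X] at this
  have hmem : Dtilde d Δ1 PY P1 ∈ {v | ∃ PY : A → ℝ,
      IsPMF PY ∧ Dtilde d Δ0 PY P0 ≤ lam ∧ v = Dtilde d Δ1 PY P1} :=
    ⟨PY, hPY, h2, rfl⟩
  have hbdd : BddBelow {v | ∃ PY : A → ℝ,
      IsPMF PY ∧ Dtilde d Δ0 PY P0 ≤ lam ∧ v = Dtilde d Δ1 PY P1} := by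
    refine ⟨0, ?_⟩
    rintro v ⟨PY', hPY', -, rfl⟩
    exact Dtilde_nonneg d Δ1 PY' P1 hP1 hP1pos
  calc sInf {v | ∃ PY : A → ℝ,
      IsPMF PY ∧ Dtilde d Δ0 PY P0 ≤ lam ∧ v = Dtilde d Δ1 PY P1}
      ≤ Dtilde d Δ1 PY P1 := csInf_le hbdd hmem
    _ ≤ klDiv QX P1 := h1
    _ ≤ Dtilde d (Δ0 + Δ1) PZ P1 + ε := le_of_lt htlt
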